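/- There exists a constant K > 0 depending only on q and k such that, setting δ_n = K · n^{q/⌊log n⌋ − k/2} · (⌊log n⌋)^{2 + 1/(2⌊log n⌋)}, one has P( max_{1≤m≤⌊2n^k⌋} | Γ_m^n − m/(2n^k) | > δ_n ) = o(n^{−q}) as n → ∞, where Γ_m^n = γ_1^n + ⋯ + γ_m^n. -/

import Mathlib

open MeasureTheory ProbabilityTheory Filter Asymptotics

/-- The uniform probability distribution on the interval `(a, b)`. -/
noncomputable def uniformIoo (a b : ℝ) : Measure ℝ :=
  (volume (Set.Ioo a b))⁻¹ • volume.restrict (Set.Ioo a b)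

/-- Fix `k > 1` and `q > 0`. For each `n`, let `γ_1^n, γ_2^n, …` be
independent random variables, each uniform on `(0, n^{−k})`, and set
`Γ_m^n = γ_1^n + ⋯ + γ_m^n`. Then there is a constant `K > 0` (depending only on `q`
and `k`) such that, with
`δ_n = K n^{q/⌊log n⌋ − k/2} (⌊log n⌋)^{2 + 1/(2⌊log n⌋)}`, the probability
`P(max_{1≤m≤⌊2n^k⌋} |Γ_m^n − m/(2n^k)| > δ_n)` is `o(n^{−q})`. -/
lemma aux_exp_quad {u : ℝ} (hu : |u| ≤ 1) : Real.exp u ≤ 1 + u + u ^ 2 := by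
  have h := Real.exp_bound hu (n := 3) (by norm_num)
  have h1 := (abs_sub_le_iff.1 h).1
  have hsum : ∑ m ∈ Finset.range 3, u ^ m / m.factorial = 1 + u + u ^ 2 / 2 := by
    simp [Finset.sum_range_succ, Nat.factorial]
  have hu3 : |u| ^ 3 ≤ u ^ 2 := by
    have h2 : |u| ^ 3 ≤ |u| ^ 2 := pow_le_pow_of_le_one (abs_nonneg u) hu (by norm_num)
    simpa [sq_abs] using h2
  rw [hsum] at h1
  norm_num [Nat.factorial] at h1
  nlinarith [h1, hu3]

lemma chernoff_aux {Ω : Type*} [MeasureSpace Ω] [IsProbabilityMeasure (ℙ : Measure Ω)]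
    (Y : ℕ → Ω → ℝ) (b t ε : ℝ) (hb : 0 ≤ b) (ht : 0 ≤ t) (htb : t * b ≤ 1)
    (hmeas : ∀ i, Measurable (Y i))
    (hindep : iIndepFun Y ℙ)
    (hbdd : ∀ i, ∀ᵐ ω ∂(ℙ : Measure Ω), |Y i ω| ≤ b)
    (hmean : ∀ i, ∫ ω, Y i ω ∂ℙ = 0) (m : ℕ) :
    (ℙ {ω | ε ≤ ∑ i ∈ Finset.range m, Y i ω}).toReal
      ≤ Real.exp (-t * ε + m * (t * b) ^ 2) := by
  have hYint : ∀ i, Integrable (Y i) ℙ := fun i =>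
    (integrable_const b).mono' (hmeas i).aestronglyMeasurable
      ((hbdd i).mono fun ω hω => by simpa [Real.norm_eq_abs] using hω)
  have hexpint : ∀ i, Integrable (fun ω => Real.exp (t * Y i ω)) ℙ := fun i =>
    (integrable_const (Real.exp (t * b))).mono'
      ((hmeas i).const_mul t).exp.aestronglyMeasurable
      ((hbdd i).mono fun ω hω => by
        rw [Real.norm_eq_abs, Real.abs_exp]
        exact Real.exp_le_exp.2 (mul_le_mul_of_nonneg_left ((abs_le.1 hω).2) ht))
  have hmgf : ∀ i, mgf (Y i) ℙ t ≤ Real.exp ((t * b) ^ 2) := by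
    intro i
    have hpt : ∀ᵐ ω ∂(ℙ : Measure Ω),
        Real.exp (t * Y i ω) ≤ 1 + t * Y i ω + (t * b) ^ 2 := by
      filter_upwards [hbdd i] with ω hω
      have h1 : |t * Y i ω| ≤ t * b := by
        rw [abs_mul, abs_of_nonneg ht]
        exact mul_le_mul_of_nonneg_left hω ht
      have h2 : (t * Y i ω) ^ 2 ≤ (t * b) ^ 2 := by
        have := pow_le_pow_left₀ (abs_nonneg _) h1 2
        rwa [sq_abs] at this
      have h3 := aux_exp_quad (h1.trans htb)
      linarith
    have hint1 : Integrable (fun ω => t * Y i ω) ℙ := (hYint i).const_mul t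
    have hint2 : Integrable (fun ω => 1 + t * Y i ω) ℙ := (integrable_const 1).add hint1
    have hint3 : Integrable (fun ω => 1 + t * Y i ω + (t * b) ^ 2) ℙ :=
      hint2.add (integrable_const _)
    calc mgf (Y i) ℙ t = ∫ ω, Real.exp (t * Y i ω) ∂ℙ := rfl
      _ ≤ ∫ ω, (1 + t * Y i ω + (t * b) ^ 2) ∂ℙ := integral_mono_ae (hexpint i) hint3 hpt
      _ = 1 + (t * b) ^ 2 := by
          rw [integral_add hint2 (integrable_const _),
            integral_add (integrable_const (1:ℝ)) hint1, integral_const_mul, hmean i]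
          simp
      _ ≤ Real.exp ((t * b) ^ 2) := by
          have := Real.add_one_le_exp ((t * b) ^ 2)
          linarith
  have hSeq : (∑ i ∈ Finset.range m, Y i) = fun ω => ∑ i ∈ Finset.range m, Y i ω := by
    ext ω; simp
  have hint : Integrable (fun ω => Real.exp (t * (∑ i ∈ Finset.range m, Y i) ω)) ℙ :=
    hindep.integrable_exp_mul_sum hmeas fun i _ => hexpint i
  have hmain := measure_ge_le_exp_mul_mgf (X := ∑ i ∈ Finset.range m, Y i) (μ := ℙ) ε ht hint
  have hprod : mgf (∑ i ∈ Finset.range m, Y i) ℙ t ≤ Real.exp (m * (t * b) ^ 2) := by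
    rw [hindep.mgf_sum hmeas]
    calc ∏ i ∈ Finset.range m, mgf (Y i) ℙ t
        ≤ ∏ _i ∈ Finset.range m, Real.exp ((t * b) ^ 2) :=
          Finset.prod_le_prod (fun i _ => mgf_nonneg) (fun i _ => hmgf i)
      _ = Real.exp (m * (t * b) ^ 2) := by
          rw [Finset.prod_const, Finset.card_range, ← Real.exp_nat_mul]
  rw [hSeq] at hmain
  refine hmain.trans ?_
  rw [Real.exp_add]
  rw [hSeq] at hprod
  exact mul_le_mul_of_nonneg_left hprod (Real.exp_pos _).le

set_option maxHeartbeats 1000000 in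
theorem max_deviation_of_uniform_partial_sums_littleO
    {Ω : Type*} [MeasureSpace Ω] [IsProbabilityMeasure (ℙ : Measure Ω)]
    (k q : ℝ) (hk : 1 < k) (hq : 0 < q)
    (γ : ℕ → ℕ → Ω → ℝ)
    (hmeas : ∀ n m, Measurable (γ n m))
    (hindep : ∀ n : ℕ, iIndepFun (fun m => γ n (m + 1)) ℙ)
    (hunif : ∀ n : ℕ, 1 ≤ n → ∀ m : ℕ, 1 ≤ m →
      Measure.map (γ n m) ℙ = uniformIoo 0 ((n : ℝ) ^ (-k))) :
    ∃ K : ℝ, 0 < K ∧ ∀ δ : ℕ → ℝ,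
      (∀ n, δ n = K * (n : ℝ) ^ (q / (⌊Real.log n⌋₊ : ℝ) - k / 2) *
        (⌊Real.log n⌋₊ : ℝ) ^ ((2 : ℝ) + 1 / (2 * (⌊Real.log n⌋₊ : ℝ)))) →
      (fun n => (ℙ {ω | δ n < ⨆ m ∈ Finset.Icc 1 ⌊2 * (n : ℝ) ^ k⌋₊,
          |(∑ j ∈ Finset.Icc 1 m, γ n j ω) - (m : ℝ) / (2 * (n : ℝ) ^ k)|}).toReal)
        =o[atTop] fun n => (n : ℝ) ^ (-q) := by
  refine ⟨1, one_pos, fun δ hδ => ?_⟩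
  set P : ℕ → ℝ := fun n => (ℙ {ω | δ n < ⨆ m ∈ Finset.Icc 1 ⌊ 2 * (n : ℝ) ^ k⌋₊,
      |(∑ j ∈ Finset.Icc 1 m, γ n j ω) - (m : ℝ) / (2 * (n : ℝ) ^ k)|}).toReal with hP
  rw [isLittleO_iff_tendsto']
  swap
  · filter_upwards [eventually_ge_atTop 1] with n hn hzero
    exact absurd hzero (Real.rpow_pos_of_pos (by exact_mod_cast hn : (0:ℝ) < n) _).ne'
  apply squeeze_zero' (g := fun n : ℕ => 4 / (n : ℝ))
  · filter_upwards [eventually_ge_atTop 1] with n hn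
    exact div_nonneg ENNReal.toReal_nonneg (Real.rpow_nonneg (by positivity) _)
  swap
  · exact tendsto_const_div_atTop_nhds_zero_nat 4
  have hlog : Tendsto (fun n : ℕ => Real.log n) atTop atTop :=
    Real.tendsto_log_atTop.comp tendsto_natCast_atTop_atTop
  filter_upwards [eventually_ge_atTop 3, hlog.eventually_ge_atTop 2,
    hlog.eventually_ge_atTop (32 * (k + q + 1))] with n hn3 hx2 hx32
  -- basic facts about n
  have hn1 : 1 ≤ n := le_trans (by norm_num) hn3
  have hnR1 : (1:ℝ) ≤ (n:ℝ) := by exact_mod_cast hn1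
  have hnpos : (0:ℝ) < (n:ℝ) := lt_of_lt_of_le one_pos hnR1
  set x : ℝ := Real.log n with hxdef
  have hnk : (0:ℝ) < (n:ℝ) ^ k := Real.rpow_pos_of_pos hnpos _
  set c : ℝ := (n:ℝ) ^ (-k) with hcdef
  have hc : 0 < c := Real.rpow_pos_of_pos hnpos _
  have hcinv : c = ((n:ℝ) ^ k)⁻¹ := by rw [hcdef, Real.rpow_neg hnpos.le]
  set L : ℝ := (⌊Real.log n⌋₊ : ℝ) with hLdef
  have hL1 : (1:ℝ) ≤ L := by
    rw [hLdef]
    have h0 : (1:ℕ) ≤ ⌊Real.log n⌋₊ := Nat.le_floor (by push_cast; linarith)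
    exact_mod_cast h0
  have hLpos : (0:ℝ) < L := lt_of_lt_of_le one_pos hL1
  have hδn : δ n = (n:ℝ) ^ (q / L - k / 2) * L ^ ((2:ℝ) + 1 / (2 * L)) := by
    rw [hδ n, one_mul]
  have hδpos : 0 < δ n := by
    rw [hδn]
    exact mul_pos (Real.rpow_pos_of_pos hnpos _) (Real.rpow_pos_of_pos hLpos _)
  -- the key lower bound on the exponent
  have hexp_lb : (k + q + 1) * x ≤ (δ n)^2 * ((n:ℝ) ^ k) / 2 := by
    have h1 : (δ n)^2 * ((n:ℝ)^k) = (n:ℝ) ^ (2 * (q / L)) * L ^ ((4:ℝ) + 1 / L) := by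
      rw [hδn, mul_pow, ← Real.rpow_natCast ((n:ℝ) ^ (q / L - k / 2)) 2,
        ← Real.rpow_natCast (L ^ ((2:ℝ) + 1 / (2 * L))) 2,
        ← Real.rpow_mul hnpos.le, ← Real.rpow_mul hLpos.le]
      rw [mul_comm ((n:ℝ) ^ ((q / L - k / 2) * (2:ℕ))) _, mul_assoc,
        ← Real.rpow_add hnpos]
      have e1 : (q / L - k / 2) * ((2:ℕ):ℝ) + k = 2 * (q / L) := by push_cast; ring
      have e2 : ((2:ℝ) + 1 / (2 * L)) * ((2:ℕ):ℝ) = (4:ℝ) + 1 / L := by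
        push_cast; field_simp; ring
      rw [e1, e2, mul_comm]
    have h2 : (1:ℝ) ≤ (n:ℝ) ^ (2 * (q / L)) := by
      have : (n:ℝ) ^ (0:ℝ) ≤ (n:ℝ) ^ (2 * (q / L)) :=
        Real.rpow_le_rpow_of_exponent_le hnR1 (by positivity)
      simpa using this
    have h3 : (x - 1) ^ 4 ≤ L ^ ((4:ℝ) + 1 / L) := by
      have h31 : L ^ ((4:ℝ)) ≤ L ^ ((4:ℝ) + 1 / L) := by
        apply Real.rpow_le_rpow_of_exponent_le hL1
        have := one_div_pos.2 hLpos
        linarith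
      have hx1 : (0:ℝ) ≤ x - 1 := by linarith
      have h32 : x - 1 ≤ L := by
        rw [hLdef]
        exact (Nat.sub_one_lt_floor x).le
      have h33 : (x - 1) ^ ((4:ℝ)) ≤ L ^ ((4:ℝ)) :=
        Real.rpow_le_rpow hx1 h32 (by norm_num)
      calc (x-1)^4 = (x-1) ^ ((4:ℕ):ℝ) := by rw [Real.rpow_natCast]
        _ = (x-1) ^ ((4:ℝ)) := by norm_num
        _ ≤ L ^ ((4:ℝ)) := h33
        _ ≤ _ := h31
    have h4 : (x - 1)^4 ≤ (δ n)^2 * ((n:ℝ)^k) := by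
      rw [h1]
      calc (x-1)^4 ≤ L ^ ((4:ℝ) + 1/L) := h3
        _ = 1 * (L ^ ((4:ℝ) + 1/L)) := (one_mul _).symm
        _ ≤ (n:ℝ) ^ (2 * (q/L)) * L ^ ((4:ℝ) + 1/L) := by
            apply mul_le_mul_of_nonneg_right h2 (Real.rpow_nonneg hLpos.le _)
    -- (x-1)^4 / 2 ≥ (k+q+1) x  given x ≥ 2 and x ≥ 32(k+q+1)
    have h5 : (k + q + 1) * x ≤ (x - 1)^4 / 2 := by
      have hx0 : (0:ℝ) < x := by linarith
      have hhalf : x / 2 ≤ x - 1 := by linarith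
      have h51 : (x/2)^4 ≤ (x-1)^4 := pow_le_pow_left₀ (by positivity) hhalf 4
      have hxx : x ≤ x ^ 3 := by nlinarith [sq_nonneg x, sq_nonneg (x-1)]
      have h52 : 32 * (k + q + 1) * x ≤ x ^ 3 * x :=
        mul_le_mul_of_nonneg_right (hx32.trans hxx) hx0.le
      nlinarith
    linarith
  -- local notations for the union bound
  set M : ℕ := ⌊2 * (n:ℝ) ^ k⌋₊ with hMdef
  have hMle : (M:ℝ) ≤ 2 * (n:ℝ) ^ k := Nat.floor_le (by positivity)
  set e0 : ℝ := Real.exp (-((δ n)^2 * ((n:ℝ)^k) / 2)) with he0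
  set A : ℕ → Set Ω := fun m => {ω | δ n < |(∑ j ∈ Finset.Icc 1 m, γ n j ω) -
      (m : ℝ) / (2 * (n : ℝ) ^ k)|} with hA
  -- a.e. bounds on each γ n j
  have hae : ∀ j : ℕ, 1 ≤ j → ∀ᵐ ω ∂(ℙ : Measure Ω), γ n j ω ∈ Set.Ioo 0 c := by
    intro j hj
    have hvol : volume (Set.Ioo (0:ℝ) c) = ENNReal.ofReal c := by
      rw [Real.volume_Ioo, sub_zero]
    have hpre : ℙ (γ n j ⁻¹' Set.Ioo 0 c) = 1 := by
      rw [← Measure.map_apply (hmeas n j) measurableSet_Ioo, hunif n hn1 j hj,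
        uniformIoo, Measure.smul_apply, Measure.restrict_apply measurableSet_Ioo,
        Set.inter_self, hvol, smul_eq_mul]
      exact ENNReal.inv_mul_cancel (by simp [hc]) ENNReal.ofReal_ne_top
    have hcompl : ℙ ((γ n j ⁻¹' Set.Ioo 0 c)ᶜ) = 0 := by
      rw [measure_compl ((hmeas n j) measurableSet_Ioo) (measure_ne_top _ _), hpre,
        measure_univ, tsub_self]
    exact ae_iff.2 hcompl
  have hγint : ∀ j : ℕ, 1 ≤ j → Integrable (fun ω => γ n j ω) ℙ := by
    intro j hj
    refine (integrable_const c).mono' (hmeas n j).aestronglyMeasurable ?_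
    filter_upwards [hae j hj] with ω hω
    rw [Real.norm_eq_abs, abs_of_pos hω.1]
    exact hω.2.le
  have hγmean : ∀ j : ℕ, 1 ≤ j → ∫ ω, γ n j ω ∂ℙ = c / 2 := by
    intro j hj
    have h1 : ∫ ω, γ n j ω ∂ℙ = ∫ y, y ∂(Measure.map (γ n j) ℙ) :=
      (integral_map (hmeas n j).aemeasurable aestronglyMeasurable_id).symm
    rw [h1, hunif n hn1 j hj, uniformIoo, integral_smul_measure]
    have hvol : volume (Set.Ioo (0:ℝ) c) = ENNReal.ofReal c := by
      rw [Real.volume_Ioo, sub_zero]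
    have hid : ∫ y in Set.Ioo (0:ℝ) c, y = c^2/2 := by
      rw [← MeasureTheory.integral_Ioc_eq_integral_Ioo,
        ← intervalIntegral.integral_of_le hc.le, integral_id]
      ring
    rw [hvol, hid, ENNReal.toReal_inv, ENNReal.toReal_ofReal hc.le, smul_eq_mul]
    field_simp
  -- centered variables and their negations
  set Y : ℕ → Ω → ℝ := fun i ω => γ n (i+1) ω - c/2 with hYdef
  set Z : ℕ → Ω → ℝ := fun i ω => c/2 - γ n (i+1) ω with hZdef
  have hYmeas : ∀ i, Measurable (Y i) := fun i => (hmeas n (i+1)).sub measurable_const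
  have hZmeas : ∀ i, Measurable (Z i) := fun i => measurable_const.sub (hmeas n (i+1))
  have hYindep : iIndepFun Y ℙ :=
    (hindep n).comp (fun _ (y : ℝ) => y - c/2) (fun _ => measurable_id.sub measurable_const)
  have hZindep : iIndepFun Z ℙ :=
    (hindep n).comp (fun _ (y : ℝ) => c/2 - y) (fun _ => measurable_const.sub measurable_id)
  have hYbdd : ∀ i, ∀ᵐ ω ∂(ℙ : Measure Ω), |Y i ω| ≤ c/2 := by
    intro i
    filter_upwards [hae (i+1) (Nat.le_add_left 1 i)] with ω hω
    exact abs_le.2 ⟨by simp only [hYdef]; linarith [hω.1], by simp only [hYdef]; linarith [hω.2]⟩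
  have hZbdd : ∀ i, ∀ᵐ ω ∂(ℙ : Measure Ω), |Z i ω| ≤ c/2 := by
    intro i
    filter_upwards [hYbdd i] with ω hω
    simpa [hYdef, hZdef, abs_sub_comm] using hω
  have hYmean : ∀ i, ∫ ω, Y i ω ∂ℙ = 0 := by
    intro i
    simp only [hYdef]
    rw [integral_sub (hγint (i+1) (Nat.le_add_left 1 i)) (integrable_const _),
      hγmean (i+1) (Nat.le_add_left 1 i), integral_const]
    simp
  have hZmean : ∀ i, ∫ ω, Z i ω ∂ℙ = 0 := by
    intro i
    simp only [hZdef]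
    rw [integral_sub (integrable_const _) (hγint (i+1) (Nat.le_add_left 1 i)),
      hγmean (i+1) (Nat.le_add_left 1 i), integral_const]
    simp
  -- partial-sum identities
  have hicc : ∀ (m : ℕ) (ω : Ω), ∑ j ∈ Finset.Icc 1 m, γ n j ω
      = ∑ i ∈ Finset.range m, γ n (i+1) ω := by
    intro m ω
    induction m with
    | zero => simp
    | succ m ih =>
      rw [Finset.sum_Icc_succ_top (Nat.succ_le_succ (Nat.zero_le m)),
        Finset.sum_range_succ, ih]
  have hsumY : ∀ (m : ℕ) (ω : Ω), ∑ i ∈ Finset.range m, Y i ω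
      = (∑ j ∈ Finset.Icc 1 m, γ n j ω) - m * (c/2) := by
    intro m ω
    simp only [hYdef]
    rw [Finset.sum_sub_distrib, Finset.sum_const, Finset.card_range, hicc m ω,
      nsmul_eq_mul]
  have hsumZ : ∀ (m : ℕ) (ω : Ω), ∑ i ∈ Finset.range m, Z i ω
      = m * (c/2) - (∑ j ∈ Finset.Icc 1 m, γ n j ω) := by
    intro m ω
    simp only [hZdef]
    rw [Finset.sum_sub_distrib, Finset.sum_const, Finset.card_range, ← hicc m ω,
      nsmul_eq_mul]
  -- rewrite of the centering constant
  have hrw : ∀ m : ℕ, (m : ℝ) / (2 * (n:ℝ) ^ k) = m * (c/2) := by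
    intro m
    rw [hcinv]
    field_simp
  -- the per-m tail bound
  have hA_bound : ∀ m ∈ Finset.Icc 1 M, ℙ (A m) ≤ ENNReal.ofReal (2 * e0) := by
    intro m hm
    obtain ⟨hm1, hmM⟩ := Finset.mem_Icc.1 hm
    have hm0 : (0:ℝ) < m := by exact_mod_cast hm1
    by_cases hcase : (m : ℝ) * (c/2) ≤ δ n
    · -- deterministic regime: the event is null
      have hz : ℙ (A m) = 0 := by
        rw [measure_eq_zero_iff_ae_notMem]
        have haes : ∀ᵐ ω ∂(ℙ : Measure Ω), ∀ j ∈ Finset.Icc 1 m, γ n j ω ∈ Set.Ioo 0 c := by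
          rw [Filter.eventually_all_finset]
          intro j hj
          exact hae j (Finset.mem_Icc.1 hj).1
        filter_upwards [haes] with ω hω
        simp only [hA, Set.mem_setOf_eq, not_lt, hrw m]
        have h0 : 0 ≤ ∑ j ∈ Finset.Icc 1 m, γ n j ω :=
          Finset.sum_nonneg fun j hj => (hω j hj).1.le
        have h1 : ∑ j ∈ Finset.Icc 1 m, γ n j ω ≤ m * c := by
          calc ∑ j ∈ Finset.Icc 1 m, γ n j ω ≤ ∑ _j ∈ Finset.Icc 1 m, c :=
                Finset.sum_le_sum fun j hj => (hω j hj).2.le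
            _ = m * c := by
                rw [Finset.sum_const, Nat.card_Icc, nsmul_eq_mul]
                push_cast
                ring
        have habs : |(∑ j ∈ Finset.Icc 1 m, γ n j ω) - m * (c/2)| ≤ m * (c/2) :=
          abs_le.2 ⟨by linarith, by linarith⟩
        exact habs.trans hcase
      rw [hz]
      exact zero_le
    · push_neg at hcase
      have hmc2pos : (0:ℝ) < (m:ℝ) * c^2 := mul_pos hm0 (pow_pos hc 2)
      set t : ℝ := 2 * δ n / (m * c^2) with htdef
      have ht : 0 ≤ t := le_of_lt (by rw [htdef]; exact div_pos (by linarith) hmc2pos)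
      have htc : t * (c/2) = δ n / (m * c) := by
        rw [htdef]
        field_simp
      have htb : t * (c/2) ≤ 1 := by
        rw [htc, div_le_one (mul_pos hm0 hc)]
        nlinarith
      have harith : -t * δ n + m * (t * (c/2))^2 = -((δ n)^2 / (m * c^2)) := by
        rw [htc, htdef]
        field_simp
        ring
      have hmono : -((δ n)^2 / (m * c^2)) ≤ -((δ n)^2 * ((n:ℝ)^k) / 2) := by
        rw [neg_le_neg_iff]
        rw [div_le_div_iff₀ (by norm_num : (0:ℝ) < 2) hmc2pos]
        have hmc2 : ((n:ℝ)^k) * ((m:ℝ) * c^2) ≤ 2 := by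
          have h1 : (m:ℝ) ≤ 2 * (n:ℝ)^k := le_trans (by exact_mod_cast hmM) hMle
          have h2 : ((n:ℝ)^k) * ((m:ℝ) * c^2) ≤ ((n:ℝ)^k) * ((2 * (n:ℝ)^k) * c^2) := by
            apply mul_le_mul_of_nonneg_left _ hnk.le
            exact mul_le_mul_of_nonneg_right h1 (pow_pos hc 2).le
          have h3 : ((n:ℝ)^k) * ((2 * (n:ℝ)^k) * c^2) = 2 := by
            rw [hcinv]
            field_simp
          linarith
        nlinarith [mul_le_mul_of_nonneg_left hmc2 (sq_nonneg (δ n))]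
      have hch1 := chernoff_aux Y (c/2) t (δ n) (by linarith) ht htb hYmeas hYindep hYbdd
        hYmean m
      have hch2 := chernoff_aux Z (c/2) t (δ n) (by linarith) ht htb hZmeas hZindep hZbdd
        hZmean m
      have hbnd : Real.exp (-t * δ n + m * (t * (c/2))^2) ≤ e0 := by
        rw [he0, harith]
        exact Real.exp_le_exp.2 hmono
      have hsub : A m ⊆ {ω | δ n ≤ ∑ i ∈ Finset.range m, Y i ω}
          ∪ {ω | δ n ≤ ∑ i ∈ Finset.range m, Z i ω} := by
        intro ω hω
        simp only [hA, Set.mem_setOf_eq, hrw m] at hω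
        rcases lt_abs.1 hω with h | h
        · left
          rw [Set.mem_setOf_eq, hsumY m ω]
          linarith
        · right
          rw [Set.mem_setOf_eq, hsumZ m ω]
          linarith
      calc ℙ (A m) ≤ ℙ {ω | δ n ≤ ∑ i ∈ Finset.range m, Y i ω}
            + ℙ {ω | δ n ≤ ∑ i ∈ Finset.range m, Z i ω} :=
            (measure_mono hsub).trans (measure_union_le _ _)
        _ ≤ ENNReal.ofReal e0 + ENNReal.ofReal e0 := by
            gcongr
            · exact (ENNReal.le_ofReal_iff_toReal_le (measure_ne_top _ _)
                (Real.exp_pos _).le).2 (hch1.trans hbnd)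
            · exact (ENNReal.le_ofReal_iff_toReal_le (measure_ne_top _ _)
                (Real.exp_pos _).le).2 (hch2.trans hbnd)
        _ = ENNReal.ofReal (2 * e0) := by
            rw [← ENNReal.ofReal_add (Real.exp_pos _).le (Real.exp_pos _).le]
            norm_num [two_mul]
            rfl
  have he0pos : 0 < e0 := Real.exp_pos _
  -- union bound
  have hunion : ℙ {ω | δ n < ⨆ m ∈ Finset.Icc 1 M,
      |(∑ j ∈ Finset.Icc 1 m, γ n j ω) - (m : ℝ) / (2 * (n : ℝ) ^ k)|}
      ≤ ∑ m ∈ Finset.Icc 1 M, ℙ (A m) := by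
    refine (measure_mono ?_).trans (measure_biUnion_finset_le _ _)
    intro ω hω
    simp only [Set.mem_setOf_eq] at hω
    by_contra hcon
    simp only [Set.mem_iUnion, not_exists, hA, Set.mem_setOf_eq, not_lt] at hcon
    refine absurd hω (not_lt.2 ?_)
    exact Real.iSup_le (fun m => Real.iSup_le (fun hm => hcon m hm) hδpos.le) hδpos.le
  have hsum_bound : ∑ m ∈ Finset.Icc 1 M, ℙ (A m)
      ≤ (M : ENNReal) * ENNReal.ofReal (2 * e0) := by
    calc ∑ m ∈ Finset.Icc 1 M, ℙ (A m) ≤ ∑ _m ∈ Finset.Icc 1 M, ENNReal.ofReal (2 * e0) :=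
          Finset.sum_le_sum hA_bound
      _ = (M : ENNReal) * ENNReal.ofReal (2 * e0) := by
          rw [Finset.sum_const, Nat.card_Icc, nsmul_eq_mul]
          norm_num
  have hPle : P n ≤ (M : ℝ) * (2 * e0) := by
    have h1 := ENNReal.toReal_mono
      (ENNReal.mul_ne_top (ENNReal.natCast_ne_top M) ENNReal.ofReal_ne_top)
      (hunion.trans hsum_bound)
    rw [ENNReal.toReal_mul, ENNReal.toReal_natCast,
      ENNReal.toReal_ofReal (by linarith : (0:ℝ) ≤ 2 * e0)] at h1
    exact h1
  -- final numeric chain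
  have hq0 : (0:ℝ) ≤ (n:ℝ) ^ q := Real.rpow_nonneg hnpos.le _
  rw [Real.rpow_neg hnpos.le, div_inv_eq_mul]
  have hb1 : P n * (n:ℝ)^q ≤ (M:ℝ) * (2 * e0) * (n:ℝ)^q :=
    mul_le_mul_of_nonneg_right hPle hq0
  have hb2 : (M:ℝ) * (2 * e0) * (n:ℝ)^q ≤ 2 * (n:ℝ)^k * (2 * e0) * (n:ℝ)^q :=
    mul_le_mul_of_nonneg_right
      (mul_le_mul_of_nonneg_right hMle (by linarith : (0:ℝ) ≤ 2 * e0)) hq0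
  have hb3 : 2 * (n:ℝ)^k * (2 * e0) * (n:ℝ)^q = 4 * Real.exp ((k+q) * x) * e0 := by
    have h4 : (n:ℝ)^(k+q) = Real.exp ((k+q) * x) := by
      rw [Real.rpow_def_of_pos hnpos, hxdef, mul_comm]
    rw [← h4, Real.rpow_add hnpos]
    ring
  have hb5 : 4 * Real.exp ((k+q) * x) * e0 ≤ 4 * Real.exp (-x) := by
    rw [he0, mul_assoc, ← Real.exp_add]
    have h5 : (k+q) * x + -((δ n)^2 * ((n:ℝ)^k) / 2) ≤ -x := by linarith [hexp_lb]
    exact mul_le_mul_of_nonneg_left (Real.exp_le_exp.2 h5) (by norm_num)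
  have hb6 : Real.exp (-x) = ((n:ℝ))⁻¹ := by
    rw [Real.exp_neg, hxdef, Real.exp_log hnpos]
  calc P n * (n:ℝ)^q ≤ 4 * Real.exp (-x) := by linarith
    _ = 4 / (n:ℝ) := by rw [hb6, div_eq_mul_inv]
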